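/- The Lévy fractional Brownian motion is the unique (in law) Gaussian process on R^N_+ that is self-similar of index H ∈ (0,1), vanishes at 0, and has increments stationary in the strong sense: any such process X satisfies E[X_s X_t] = (σ²/2)(‖s‖^{2H} + ‖t‖^{2H} - ‖t-s‖^{2H}) with σ² = E[X_{ε_1}²]. -/

import Mathlib

open MeasureTheory ProbabilityTheory Set

/-- The Euclidean norm on `ℝᴺ`. -/
noncomputable def euclNorm {N : ℕ} (x : Fin N → ℝ) : ℝ := Real.sqrt (∑ i, x i ^ 2)

/-- A rigid motion of `ℝᴺ` is a self-map preserving Euclidean distances. -/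
def IsRigidMotion {N : ℕ} (g : (Fin N → ℝ) → (Fin N → ℝ)) : Prop :=
  ∀ x y : Fin N → ℝ, euclNorm (g x - g y) = euclNorm (x - y)

/-- A real-valued process is Gaussian if every finite linear combination of its values
has a (possibly degenerate) Gaussian law. -/
def IsGaussianProcess' {Ω : Type*} [MeasureSpace Ω] {ι : Type*} (X : ι → Ω → ℝ) : Prop :=
  ∀ (n : ℕ) (t : Fin n → ι) (c : Fin n → ℝ), ∃ (μ : ℝ) (v : NNReal),
    Measure.map (fun ω => ∑ i, c i * X (t i) ω) (volume : Measure Ω) = gaussianReal μ v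

lemma euclNorm_eq_norm {N : ℕ} (x : Fin N → ℝ) :
    euclNorm x = ‖(WithLp.equiv 2 (Fin N → ℝ)).symm x‖ := by
  rw [EuclideanSpace.norm_eq]
  simp [euclNorm, Real.norm_eq_abs, sq_abs]

lemma euclNorm_smul {N : ℕ} (a : ℝ) (x : Fin N → ℝ) :
    euclNorm (a • x) = |a| * euclNorm x := by
  simp only [euclNorm, Pi.smul_apply, smul_eq_mul, mul_pow]
  rw [← Finset.mul_sum, Real.sqrt_mul (sq_nonneg a), Real.sqrt_sq_eq_abs]

lemma integrable_sq_gaussianReal (m : ℝ) (v : NNReal) :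
    Integrable (fun x : ℝ => x ^ 2) (gaussianReal m v) := by
  by_cases hv : v = 0
  · subst hv
    rw [gaussianReal_zero_var]
    refine ⟨(measurable_id.pow_const 2).aestronglyMeasurable, ?_⟩
    rw [HasFiniteIntegral, lintegral_dirac' _ (by measurability)]
    exact ENNReal.coe_lt_top
  · rw [gaussianReal_of_var_ne_zero _ hv,
      integrable_withDensity_iff (measurable_gaussianPDF _ _)
        (ae_of_all _ fun x => ENNReal.ofReal_lt_top)]
    have hrw : (fun x : ℝ => x ^ 2 * (gaussianPDF m v x).toReal)
        = fun x => (fun y => (y + m) ^ 2 * ((Real.sqrt (2 * Real.pi * v))⁻¹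
            * Real.exp (-(2 * (v:ℝ))⁻¹ * y ^ 2))) (x - m) := by
      funext x
      rw [show gaussianPDF m v x = ENNReal.ofReal (gaussianPDFReal m v x) from rfl,
        ENNReal.toReal_ofReal (gaussianPDFReal_nonneg _ _ _)]
      simp only [gaussianPDFReal, sub_add_cancel]
      congr 2
      ring_nf
    rw [hrw]
    have hb : (0:ℝ) < (2 * (v:ℝ))⁻¹ := by
      have : (0:ℝ) < (v:ℝ) := by
        have := v.coe_nonneg
        rcases this.lt_or_eq with h | h
        · exact h
        · exact absurd (by exact_mod_cast h.symm : v = 0) hv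
      positivity
    have h2 : Integrable (fun y : ℝ => y ^ 2 * Real.exp (-(2 * (v:ℝ))⁻¹ * y ^ 2)) := by
      have := integrable_rpow_mul_exp_neg_mul_sq hb (s := 2) (by norm_num)
      convert this using 2 with y
      rw [← Real.rpow_natCast y 2]
      norm_num
    have h1 : Integrable (fun y : ℝ => y * Real.exp (-(2 * (v:ℝ))⁻¹ * y ^ 2)) :=
      integrable_mul_exp_neg_mul_sq hb
    have h0 : Integrable (fun y : ℝ => Real.exp (-(2 * (v:ℝ))⁻¹ * y ^ 2)) :=
      integrable_exp_neg_mul_sq hb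
    have heq : (fun y : ℝ => (y + m) ^ 2 * ((Real.sqrt (2 * Real.pi * v))⁻¹
        * Real.exp (-(2 * (v:ℝ))⁻¹ * y ^ 2)))
        = fun y => (Real.sqrt (2 * Real.pi * v))⁻¹ * (y ^ 2 * Real.exp (-(2 * (v:ℝ))⁻¹ * y ^ 2))
          + ((2 * m * (Real.sqrt (2 * Real.pi * v))⁻¹) * (y * Real.exp (-(2 * (v:ℝ))⁻¹ * y ^ 2))
          + (m ^ 2 * (Real.sqrt (2 * Real.pi * v))⁻¹) * Real.exp (-(2 * (v:ℝ))⁻¹ * y ^ 2)) := by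
      funext y; ring
    have hF : Integrable (fun y : ℝ => (y + m) ^ 2 * ((Real.sqrt (2 * Real.pi * v))⁻¹
        * Real.exp (-(2 * (v:ℝ))⁻¹ * y ^ 2))) := by
      rw [heq]
      exact (h2.const_mul _).add ((h1.const_mul _).add (h0.const_mul _))
    exact hF.comp_sub_right m

lemma integral_comp_eq_of_map_eq {Ω : Type*} [MeasureSpace Ω] {n : ℕ}
    {f g : Ω → Fin n → ℝ} (hf : Measurable f) (hg : Measurable g)
    (h : Measure.map f (volume : Measure Ω) = Measure.map g volume)
    {φ : (Fin n → ℝ) → ℝ} (hφ : Measurable φ) :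
    ∫ ω, φ (f ω) = ∫ ω, φ (g ω) := by
  rw [← integral_map hf.aemeasurable hφ.aestronglyMeasurable, h,
    integral_map hg.aemeasurable hφ.aestronglyMeasurable]

lemma integrable_sq_of_gaussian {Ω : Type*} [MeasureSpace Ω] {Y : Ω → ℝ} (hY : Measurable Y)
    {m : ℝ} {v : NNReal} (h : Measure.map Y (volume : Measure Ω) = gaussianReal m v) :
    Integrable (fun ω => Y ω ^ 2) (volume : Measure Ω) :=
  (integrable_map_measure (f := Y) (g := fun x : ℝ => x ^ 2)
    (by rw [h]; exact (measurable_id.pow_const 2).aestronglyMeasurable)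
    hY.aemeasurable).mp (by rw [h]; exact integrable_sq_gaussianReal m v)

theorem levy_fbm_characterization {Ω : Type*} [MeasureSpace Ω]
    [IsProbabilityMeasure (volume : Measure Ω)]
    (N : ℕ) (hN : 0 < N) (H : ℝ) (hH : H ∈ Set.Ioo (0 : ℝ) 1)
    (X : (Fin N → ℝ) → Ω → ℝ)
    (hmeas : ∀ t, Measurable (X t))
    (hgauss : IsGaussianProcess' X)
    (hzero : ∀ᵐ ω ∂(volume : Measure Ω), X 0 ω = 0)
    (hss : ∀ a : ℝ, 0 ≤ a → ∀ (n : ℕ) (ts : Fin n → (Fin N → ℝ)), (∀ i, 0 ≤ ts i) →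
      Measure.map (fun ω i => X (a • ts i) ω) (volume : Measure Ω) =
        Measure.map (fun ω i => a ^ H * X (ts i) ω) (volume : Measure Ω))
    (hstat : ∀ g : (Fin N → ℝ) → (Fin N → ℝ), IsRigidMotion g →
      ∀ (n : ℕ) (ts : Fin n → (Fin N → ℝ)), (∀ i, 0 ≤ ts i) →
        Measure.map (fun ω i => X (g (ts i)) ω - X (g 0) ω) (volume : Measure Ω) =
          Measure.map (fun ω i => X (ts i) ω - X 0 ω) (volume : Measure Ω)) :
    ∀ s t : Fin N → ℝ, 0 ≤ s → 0 ≤ t →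
      ∫ ω, X s ω * X t ω =
        ((∫ ω, (X (Pi.single (⟨0, hN⟩ : Fin N) 1) ω) ^ 2) / 2) *
          (euclNorm s ^ (2 * H) + euclNorm t ^ (2 * H) - euclNorm (t - s) ^ (2 * H)) := by
  intro s t hs ht
  set j : Fin N := ⟨0, hN⟩ with hj
  set e1 : Fin N → ℝ := Pi.single j 1 with he1
  have he1nn : (0 : Fin N → ℝ) ≤ e1 := by
    intro i
    by_cases h : i = j <;> simp [he1, Pi.single_apply, h]
  have he1norm : euclNorm e1 = 1 := by
    have h1 : ∀ i, e1 i ^ 2 = if i = j then (1:ℝ) else 0 := by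
      intro i; by_cases h : i = j <;> simp [he1, Pi.single_apply, h]
    simp only [euclNorm, h1]
    simp
  -- key increment identity
  have key : ∀ p q : Fin N → ℝ, 0 ≤ p → 0 ≤ q →
      ∫ ω, (X q ω - X p ω) ^ 2 = euclNorm (q - p) ^ (2 * H) * ∫ ω, X e1 ω ^ 2 := by
    intro p q hp hq
    set r : ℝ := euclNorm (q - p) with hrdef
    have hr0 : 0 ≤ r := Real.sqrt_nonneg _
    set φe : (Fin N → ℝ) ≃ EuclideanSpace ℝ (Fin N) := (WithLp.equiv 2 (Fin N → ℝ)).symm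
      with hφe
    set w : EuclideanSpace ℝ (Fin N) := φe (q - p) with hw
    set u : EuclideanSpace ℝ (Fin N) := φe (r • e1) with hu
    have hwnorm : ‖w‖ = r := (euclNorm_eq_norm _).symm
    have hunorm : ‖u‖ = r := by
      rw [hu, hφe, ← euclNorm_eq_norm, euclNorm_smul, he1norm, abs_of_nonneg hr0, mul_one]
    have hwu : ‖w‖ = ‖u‖ := by rw [hwnorm, hunorm]
    set R : EuclideanSpace ℝ (Fin N) ≃ₗᵢ[ℝ] EuclideanSpace ℝ (Fin N) :=
      Submodule.reflection (ℝ ∙ (w - u))ᗮ with hR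
    have hRw : R w = u := Submodule.reflection_sub hwu
    set g : (Fin N → ℝ) → Fin N → ℝ := fun x => φe.symm (R (φe (x - p))) with hgdef
    have hφsub : ∀ x y : Fin N → ℝ, φe (x - y) = φe x - φe y := by
      intro x y; rw [hφe]; exact rfl
    have hg : IsRigidMotion g := by
      intro x y
      have h1 : φe (g x - g y) = R (φe (x - p)) - R (φe (y - p)) := by
        rw [hφsub]
        simp [hgdef]
      rw [euclNorm_eq_norm, ← hφe, h1, ← map_sub, R.norm_map, ← hφsub,
        sub_sub_sub_cancel_right, ← euclNorm_eq_norm]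
    have hgp : g p = 0 := by
      rw [hgdef]
      simp only [sub_self]
      rw [show φe (0 : Fin N → ℝ) = 0 from by rw [hφe]; exact rfl,
        map_zero]
      rw [show (0 : EuclideanSpace ℝ (Fin N)) = φe 0 from by
        rw [hφe]; exact rfl]
      exact φe.symm_apply_apply 0
    have hgq : g q = r • e1 := by
      rw [hgdef]
      show φe.symm (R (φe (q - p))) = r • e1
      rw [← hw, hRw, hu]
      exact φe.symm_apply_apply _
    have hts : ∀ i, (0 : Fin N → ℝ) ≤ (![p, q]) i := by
      intro i; fin_cases i
      · simpa using hp
      · simpa using hq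
    have hmapeq := hstat g hg 2 ![p, q] hts
    have hmf : Measurable (fun ω (i : Fin 2) => X (g (![p, q] i)) ω - X (g 0) ω) :=
      measurable_pi_lambda _ fun i => (hmeas _).sub (hmeas _)
    have hmg2 : Measurable (fun ω (i : Fin 2) => X (![p, q] i) ω - X 0 ω) :=
      measurable_pi_lambda _ fun i => (hmeas _).sub (hmeas _)
    have hmφ : Measurable (fun y : Fin 2 → ℝ => (y 1 - y 0) ^ 2) :=
      ((measurable_pi_apply 1).sub (measurable_pi_apply 0)).pow_const 2
    have step1 := integral_comp_eq_of_map_eq hmf hmg2 hmapeq hmφ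
    simp only [Matrix.cons_val_one, Matrix.head_cons, Matrix.cons_val_zero] at step1
    have l1 : (fun ω => (X (g q) ω - X (g 0) ω - (X (g p) ω - X (g 0) ω)) ^ 2)
        = fun ω => (X (r • e1) ω - X 0 ω) ^ 2 := by
      funext ω; rw [hgp, hgq]; ring
    have l2 : (fun ω => (X q ω - X 0 ω - (X p ω - X 0 ω)) ^ 2)
        = fun ω => (X q ω - X p ω) ^ 2 := by
      funext ω; ring
    rw [l1, l2] at step1
    have hz : ∫ ω, (X (r • e1) ω - X 0 ω) ^ 2 = ∫ ω, X (r • e1) ω ^ 2 :=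
      integral_congr_ae (by filter_upwards [hzero] with ω h0; rw [h0, sub_zero])
    have hss1 := hss r hr0 1 (fun _ => e1) (fun _ => he1nn)
    have hmf1 : Measurable (fun ω (i : Fin 1) => X (r • (fun _ : Fin 1 => e1) i) ω) :=
      measurable_pi_lambda _ fun i => hmeas _
    have hmg1 : Measurable (fun ω (i : Fin 1) => r ^ H * X ((fun _ : Fin 1 => e1) i) ω) :=
      measurable_pi_lambda _ fun i => (hmeas _).const_mul _
    have hmφ1 : Measurable (fun y : Fin 1 → ℝ => (y 0) ^ 2) :=
      (measurable_pi_apply 0).pow_const 2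
    have step2 := integral_comp_eq_of_map_eq hmf1 hmg1 hss1 hmφ1
    simp only [] at step2
    have step2' : ∫ ω, X (r • e1) ω ^ 2 = (r ^ H) ^ 2 * ∫ ω, X e1 ω ^ 2 := by
      rw [step2]
      simp_rw [mul_pow]
      exact integral_const_mul _ _
    have hpow : (r ^ H) ^ 2 = r ^ (2 * H) := by
      rw [← Real.rpow_natCast (r ^ H) 2, ← Real.rpow_mul hr0]
      norm_num [mul_comm]
    rw [← step1, hz, step2', hpow]
  -- squared norms
  have sq_eq : ∀ p : Fin N → ℝ, 0 ≤ p →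
      ∫ ω, X p ω ^ 2 = euclNorm p ^ (2 * H) * ∫ ω, X e1 ω ^ 2 := by
    intro p hp
    have hk := key 0 p le_rfl hp
    rw [sub_zero] at hk
    rw [← hk]
    refine integral_congr_ae ?_
    filter_upwards [hzero] with ω h0
    rw [h0, sub_zero]
  -- integrability
  have hint : ∀ p : Fin N → ℝ, Integrable (fun ω => X p ω ^ 2) (volume : Measure Ω) := by
    intro p
    obtain ⟨m, v, hmv⟩ := hgauss 1 (fun _ => p) (fun _ => 1)
    have h1 : (fun ω => ∑ i : Fin 1, (fun _ : Fin 1 => (1:ℝ)) i * X ((fun _ : Fin 1 => p) i) ω)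
        = X p := by
      funext ω; simp
    rw [h1] at hmv
    exact integrable_sq_of_gaussian (hmeas p) hmv
  have hintD : Integrable (fun ω => (X t ω - X s ω) ^ 2) (volume : Measure Ω) := by
    obtain ⟨m, v, hmv⟩ := hgauss 2 ![s, t] ![-1, 1]
    have h1 : (fun ω => ∑ i : Fin 2, (![(-1:ℝ), 1]) i * X ((![s, t]) i) ω)
        = fun ω => X t ω - X s ω := by
      funext ω
      simp [Fin.sum_univ_two]
      ring
    rw [h1] at hmv
    exact integrable_sq_of_gaussian ((hmeas t).sub (hmeas s)) hmv
  -- polarization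
  have hpol : ∫ ω, X s ω * X t ω
      = (∫ ω, ((X s ω ^ 2 + X t ω ^ 2) - (X t ω - X s ω) ^ 2)) / 2 := by
    rw [← integral_div]
    exact integral_congr_ae (ae_of_all _ fun ω => by ring)
  have hsum : Integrable (fun ω => X s ω ^ 2 + X t ω ^ 2) (volume : Measure Ω) :=
    (hint s).add (hint t)
  rw [hpol, integral_sub hsum hintD, integral_add (hint s) (hint t),
    sq_eq s hs, sq_eq t ht, key s t hs ht]
  ring
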